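/- The maps σ_s(g) = conj(g) and σ_c(g) = transpose(conj(g))⁻¹ are real group structures on SL₂(ℂ), they are inequivalent, and every real group structure on SL₂(ℂ) is equivalent to one of them. -/

import Mathlib

open Matrix

/-- `SL₂(ℂ)`. -/
abbrev SL2 := Matrix.SpecialLinearGroup (Fin 2) ℂ

/-- `σ_s(g) = conj g` (entrywise complex conjugation), the split real group structure
on `SL₂(ℂ)`, with real locus `SL₂(ℝ)`. -/
noncomputable def sigmaS : SL2 → SL2 := fun g => SpecialLinearGroup.map (starRingEnd ℂ) g

/-- Transpose, as an operation on `SL₂(ℂ)`. -/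
def transposeSL (g : SL2) : SL2 :=
  ⟨(g : Matrix (Fin 2) (Fin 2) ℂ)ᵀ, by rw [Matrix.det_transpose]; exact g.2⟩

/-- `σ_c(g) = (conj g)ᵀ⁻¹`, the compact real group structure on `SL₂(ℂ)`, with real
locus `SU₂(ℂ)`. -/
noncomputable def sigmaC : SL2 → SL2 := fun g => (transposeSL (sigmaS g))⁻¹

/-- A real group structure on `SL₂(ℂ)`: a group-theoretic involution which is
antiregular, i.e. differs from `σ_s` by a regular automorphism; since every algebraic
group automorphism of `SL₂` is inner, this means `σ = inn_c ∘ σ_s` for some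
`c ∈ SL₂(ℂ)`. -/
def IsRealGroupStructure (σ : SL2 → SL2) : Prop :=
  (∀ g h, σ (g * h) = σ g * σ h) ∧ (∀ g, σ (σ g) = g) ∧
    ∃ c : SL2, ∀ g, σ g = c * sigmaS g * c⁻¹

/-- Two real group structures on `SL₂(ℂ)` are equivalent if conjugate by an algebraic
group automorphism of `SL₂(ℂ)` (all of which are inner). -/
def EquivStruct (σ σ' : SL2 → SL2) : Prop :=
  ∃ ψ : SL2 ≃* SL2, (∃ c : SL2, ∀ g, ψ g = c * g * c⁻¹) ∧
    ∀ g, σ' g = ψ (σ (ψ.symm g))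

/-! ### Auxiliary material -/

noncomputable section RealStructAux

abbrev M2' := Matrix (Fin 2) (Fin 2) ℂ

/-- Entrywise complex conjugation of the determinant. -/
lemma conj_map_det' (b : M2') : (starRingEnd ℂ) b.det = (b.map (starRingEnd ℂ)).det := by
  rw [RingHom.map_det]; rfl

lemma map_conj_mul' (A B : M2') :
    (A * B).map (starRingEnd ℂ) = A.map (starRingEnd ℂ) * B.map (starRingEnd ℂ) := by
  ext i j; simp [Matrix.mul_apply, Fin.sum_univ_two, Matrix.map_apply]

lemma map_conj_conj' (A : M2') : (A.map (starRingEnd ℂ)).map (starRingEnd ℂ) = A := by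
  ext i j; simp [Matrix.map_apply]

lemma map_conj_neg' (A : M2') : (-A).map (starRingEnd ℂ) = -(A.map (starRingEnd ℂ)) := by
  ext i j; simp [Matrix.map_apply]

lemma sigmaS_coe (g : SL2) :
    (sigmaS g : M2') = (g : M2').map (starRingEnd ℂ) := rfl

lemma sigmaS_mul (g h : SL2) : sigmaS (g * h) = sigmaS g * sigmaS h := map_mul _ g h

lemma sigmaS_inv (g : SL2) : sigmaS g⁻¹ = (sigmaS g)⁻¹ :=
  map_inv (SpecialLinearGroup.map (starRingEnd ℂ)) g

lemma sigmaS_sigmaS (g : SL2) : sigmaS (sigmaS g) = g := by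
  apply Subtype.ext
  rw [sigmaS_coe, sigmaS_coe, map_conj_conj']

/-- The matrix `J`. -/
def Jsl : SL2 := ⟨!![0,1;-1,0], by simp [Matrix.det_fin_two_of]⟩

/-- The central element `-1` of `SL₂(ℂ)`. -/
def Nsl : SL2 := ⟨-1, by simp [Matrix.det_fin_two]⟩

lemma Nsl_central (g : SL2) : Nsl * g = g * Nsl := by
  apply Subtype.ext
  rw [Matrix.SpecialLinearGroup.coe_mul, Matrix.SpecialLinearGroup.coe_mul]
  show (-1 : M2') * g = g * (-1 : M2')
  rw [neg_one_mul, mul_neg_one]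

lemma Nsl_sq : Nsl * Nsl = 1 := by
  apply Subtype.ext
  rw [Matrix.SpecialLinearGroup.coe_mul]
  show (-1 : M2') * (-1 : M2') = 1
  rw [neg_one_mul, neg_neg]

lemma Nsl_inv : Nsl⁻¹ = Nsl := by
  rw [inv_eq_iff_mul_eq_one, Nsl_sq]

lemma Nsl_conj (X : SL2) : Nsl⁻¹ * X * Nsl = X := by
  rw [Nsl_inv, Nsl_central, mul_assoc, Nsl_sq, mul_one]

lemma sigmaS_J : sigmaS Jsl = Jsl := by
  apply Subtype.ext
  rw [sigmaS_coe]
  ext i j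
  fin_cases i <;> fin_cases j <;> simp [Jsl, Matrix.map_apply]

lemma J_sq : Jsl * Jsl = Nsl := by
  apply Subtype.ext
  rw [Matrix.SpecialLinearGroup.coe_mul]
  show ((!![0,1;-1,0] : M2')) * (!![0,1;-1,0] : M2') = (-1 : M2')
  ext i j
  fin_cases i <;> fin_cases j <;> simp [Matrix.mul_apply, Fin.sum_univ_two]

lemma sigmaC_eq (g : SL2) : sigmaC g = Jsl⁻¹ * sigmaS g * Jsl := by
  apply Subtype.ext
  rw [sigmaC]
  rw [Matrix.SpecialLinearGroup.coe_inv]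
  show ((transposeSL (sigmaS g) : M2')).adjugate = _
  rw [Matrix.SpecialLinearGroup.coe_mul, Matrix.SpecialLinearGroup.coe_mul,
    Matrix.SpecialLinearGroup.coe_inv]
  set m := (sigmaS g : M2')
  show (mᵀ).adjugate = (Jsl : M2').adjugate * m * (Jsl : M2')
  rw [Matrix.adjugate_fin_two, Matrix.adjugate_fin_two]
  show _ = _ * m * !![0,1;-1,0]
  ext i j
  fin_cases i <;> fin_cases j <;>
    simp [Matrix.mul_apply, Matrix.vecMul, dotProduct, Fin.sum_univ_two, Jsl, transposeSL]

/-- Elements of `SL₂(ℂ)` commuting with two specific unipotents are `±1`. -/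
lemma center_matrix (u : M2') (hd : u.det = 1)
    (h1 : u * !![1,1;0,1] = !![1,1;0,1] * u) (h2 : u * !![1,0;1,1] = !![1,0;1,1] * u) :
    u = 1 ∨ u = -1 := by
  have e10 : u 1 0 = 0 := by
    have := congrFun (congrFun h1 1) 1
    simpa [Matrix.mul_apply, Fin.sum_univ_two] using this
  have e01 : u 0 1 = 0 := by
    have := congrFun (congrFun h2 0) 0
    simpa [Matrix.mul_apply, Fin.sum_univ_two] using this
  have ediag : u 0 0 = u 1 1 := by
    have := congrFun (congrFun h1 0) 1
    simp [Matrix.mul_apply, Fin.sum_univ_two, e10, e01] at this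
    linear_combination this
  rw [Matrix.det_fin_two, e10, e01, ← ediag] at hd
  have hsq : u 0 0 = 1 ∨ u 0 0 = -1 := by
    have : (u 0 0 - 1) * (u 0 0 + 1) = 0 := by ring_nf; linear_combination hd
    rcases mul_eq_zero.1 this with h | h
    · left; linear_combination h
    · right; linear_combination h
  rcases hsq with h | h
  · left; ext i j; fin_cases i <;> fin_cases j <;> simp [e10, e01, h, ← ediag]
  · right; ext i j; fin_cases i <;> fin_cases j <;> simp [e10, e01, h, ← ediag]

def E1 : SL2 := ⟨!![1,1;0,1], by simp [Matrix.det_fin_two_of]⟩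
def E2 : SL2 := ⟨!![1,0;1,1], by simp [Matrix.det_fin_two_of]⟩

lemma central_SL2 (u : SL2) (h : ∀ g : SL2, u * g = g * u) :
    (u : M2') = 1 ∨ (u : M2') = -1 := by
  apply center_matrix _ u.2
  · have := congrArg (Subtype.val) (h E1); rw [Matrix.SpecialLinearGroup.coe_mul, Matrix.SpecialLinearGroup.coe_mul] at this; simpa [E1] using this
  · have := congrArg (Subtype.val) (h E2); rw [Matrix.SpecialLinearGroup.coe_mul, Matrix.SpecialLinearGroup.coe_mul] at this; simpa [E2] using this

lemma exists_alpha (M : M2') (hM : M.det = 1) :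
    ∃ α : ℂ, (α • M + (starRingEnd ℂ α) • (1 : M2')).det ≠ 0 := by
  rw [Matrix.det_fin_two] at hM
  have key : ∀ α : ℂ, (α • M + (starRingEnd ℂ α) • (1 : M2')).det
      = α^2 + α * (starRingEnd ℂ α) * (M 0 0 + M 1 1) + (starRingEnd ℂ α)^2 := by
    intro α
    rw [Matrix.det_fin_two]
    simp only [Matrix.add_apply, Matrix.smul_apply, Matrix.one_apply, smul_eq_mul]
    norm_num
    linear_combination α^2 * hM
  by_cases ht : M 0 0 + M 1 1 = -2
  · refine ⟨Complex.I, ?_⟩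
    rw [key, ht]
    simp [Complex.ext_iff]
    norm_num
  · refine ⟨1, ?_⟩
    rw [key]
    have h1 : (starRingEnd ℂ) (1:ℂ) = 1 := by simp
    rw [h1]
    intro h
    apply ht
    linear_combination h

/-- The Galois-cohomological key lemma: any cocycle is (projectively) a coboundary. -/
lemma exists_a (K c : M2') (hKre : K.map (starRingEnd ℂ) = K) (hdK : K.det = 1)
    (hdc : c.det = 1) (hKcc : K * K * (c.map (starRingEnd ℂ)) * c = 1) :
    ∃ a : M2', a.det = 1 ∧
      (a.map (starRingEnd ℂ) = K * a * c ∨ a.map (starRingEnd ℂ) = -(K * a * c)) := by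
  have hK' : ∀ i j, (starRingEnd ℂ) (K i j) = K i j := fun i j => congrFun (congrFun hKre i) j
  set cb := c.map (starRingEnd ℂ) with hcb
  have hdcb : cb.det = 1 := by rw [hcb, ← conj_map_det', hdc]; simp
  have hdKcb : (K * cb).det = 1 := by rw [Matrix.det_mul, hdK, hdcb, one_mul]
  obtain ⟨α, hα⟩ := exists_alpha (K * cb) hdKcb
  set b := α • (K * cb) + (starRingEnd ℂ α) • (1 : M2') with hb
  have hconj : b.map (starRingEnd ℂ) = K * b * c := by
    have h1 : b.map (starRingEnd ℂ) = α • (1:M2') + (starRingEnd ℂ α) • (K * c) := by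
      ext i j
      simp only [hb, Matrix.map_apply, Matrix.add_apply, Matrix.smul_apply, Matrix.mul_apply,
        Fin.sum_univ_two, Matrix.one_apply, smul_eq_mul, map_add, _root_.map_mul, hcb,
        apply_ite (starRingEnd ℂ), map_zero, _root_.map_one, Complex.conj_conj, hK']
      ring
    rw [h1, hb, Matrix.mul_add, Matrix.add_mul]
    congr 1
    · rw [Matrix.mul_smul, Matrix.smul_mul, ← Matrix.mul_assoc K K cb, hKcc]
    · rw [Matrix.mul_smul, Matrix.smul_mul, Matrix.mul_one]
  have hdb_real : (starRingEnd ℂ) b.det = b.det := by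
    rw [conj_map_det', hconj, Matrix.det_mul, Matrix.det_mul, hdK, hdc, one_mul, mul_one]
  have him : b.det.im = 0 := Complex.conj_eq_iff_im.mp hdb_real
  set s := b.det.re with hs
  have hbs : b.det = (s : ℂ) := by
    rw [Complex.ext_iff]
    constructor <;> simp [hs, him]
  have hsne : s ≠ 0 := by
    intro h; apply hα; rw [hbs, h]; simp
  have smul_eq : ∀ w : ℂ, (w • b).map (starRingEnd ℂ) = (starRingEnd ℂ w) • (K * b * c) := by
    intro w
    rw [← hconj]; ext i j; simp [Matrix.map_apply]
  have det_smul_eq : ∀ w : ℂ, (w • b).det = w^2 * (s:ℂ) := by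
    intro w
    rw [Matrix.det_smul, hbs]; norm_num
  rcases lt_or_gt_of_ne hsne with hneg | hpos
  · set t : ℝ := (Real.sqrt (-s))⁻¹ with hts
    have ht2 : (t:ℝ)^2 = (-s)⁻¹ := by
      rw [hts, ← Real.sqrt_inv, Real.sq_sqrt (by rw [inv_nonneg]; linarith)]
    refine ⟨((t:ℂ) * Complex.I) • b, ?_, Or.inr ?_⟩
    · rw [det_smul_eq]
      have h2 : ((t:ℂ) * Complex.I)^2 = ((-(t^2) : ℝ) : ℂ) := by
        push_cast
        rw [mul_pow, Complex.I_sq]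
        ring
      rw [h2, ht2, ← Complex.ofReal_mul]
      norm_cast
      field_simp
    · rw [smul_eq]
      have hcw : (starRingEnd ℂ) ((t:ℂ) * Complex.I) = -((t:ℂ) * Complex.I) := by
        simp [Complex.ext_iff]
      rw [hcw, Matrix.mul_smul, Matrix.smul_mul, neg_smul]
  · set t : ℝ := (Real.sqrt s)⁻¹ with hts
    have ht2 : (t:ℝ)^2 = s⁻¹ := by
      rw [hts, ← Real.sqrt_inv, Real.sq_sqrt (by rw [inv_nonneg]; linarith)]
    refine ⟨(t:ℂ) • b, ?_, Or.inl ?_⟩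
    · rw [det_smul_eq]
      have h2 : ((t:ℂ))^2 = ((t^2 : ℝ) : ℂ) := by push_cast; ring
      rw [h2, ht2, ← Complex.ofReal_mul]
      norm_cast
      field_simp
    · rw [smul_eq]
      rw [Complex.conj_ofReal, Matrix.mul_smul, Matrix.smul_mul]

/-- If `σ = inn_c ∘ σ_s` and `σ_s(A) = ±K'·A·c`, then `σ` is equivalent to
`g ↦ K'⁻¹ σ_s(g) K'`. -/
lemma equiv_of (σ : SL2 → SL2) (c K' A : SL2)
    (hc : ∀ g, σ g = c * sigmaS g * c⁻¹)
    (hA : sigmaS A = K' * A * c ∨ sigmaS A = Nsl * (K' * A * c)) :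
    ∃ ψ : SL2 ≃* SL2, (∃ p : SL2, ∀ g, ψ g = p * g * p⁻¹) ∧
      ∀ g, K'⁻¹ * sigmaS g * K' = ψ (σ (ψ.symm g)) := by
  refine ⟨MulAut.conj A, ⟨A, fun g => rfl⟩, fun g => ?_⟩
  rw [MulAut.conj_apply, MulAut.conj_symm_apply, hc]
  have hexp : sigmaS (A⁻¹ * g * A) = (sigmaS A)⁻¹ * sigmaS g * sigmaS A := by
    rw [sigmaS_mul, sigmaS_mul, sigmaS_inv]
  rw [hexp]
  rcases hA with h | h
  · rw [h]
    group
  · rw [h]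
    have : A * (c * ((Nsl*(K'*A*c))⁻¹ * sigmaS g * (Nsl*(K'*A*c))) * c⁻¹) * A⁻¹
        = K'⁻¹ * (Nsl⁻¹ * sigmaS g * Nsl) * K' := by group
    rw [this, Nsl_conj]

end RealStructAux

/-- `σ_s(g) = conj g` and `σ_c(g) = (conj g)ᵀ⁻¹` are real group structures on
`SL₂(ℂ)`, they are inequivalent, and every real group structure on `SL₂(ℂ)` is
equivalent to one of them. -/
theorem real_structures_on_SL2 :
    IsRealGroupStructure sigmaS ∧ IsRealGroupStructure sigmaC ∧
    ¬ EquivStruct sigmaS sigmaC ∧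
    ∀ σ : SL2 → SL2, IsRealGroupStructure σ →
      EquivStruct σ sigmaS ∨ EquivStruct σ sigmaC := by
  refine ⟨⟨sigmaS_mul, sigmaS_sigmaS, 1, fun g => by rw [inv_one, mul_one, one_mul]⟩, ?_, ?_, ?_⟩
  · -- σ_c is a real group structure
    refine ⟨?_, ?_, Jsl⁻¹, fun g => by rw [sigmaC_eq, inv_inv]⟩
    · intro g h
      rw [sigmaC_eq, sigmaC_eq, sigmaC_eq, sigmaS_mul]
      group
    · intro g
      rw [sigmaC_eq, sigmaC_eq]
      have hexp : sigmaS (Jsl⁻¹ * sigmaS g * Jsl)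
          = Jsl⁻¹ * g * Jsl := by
        rw [sigmaS_mul, sigmaS_mul, sigmaS_inv, sigmaS_J, sigmaS_sigmaS]
      rw [hexp]
      have : Jsl⁻¹ * (Jsl⁻¹ * g * Jsl) * Jsl = (Jsl * Jsl)⁻¹ * g * (Jsl * Jsl) := by group
      rw [this, J_sq, Nsl_conj]
  · -- inequivalence
    rintro ⟨ψ, ⟨p, hp⟩, heq⟩
    have hsym : ∀ g, ψ.symm g = p⁻¹ * g * p := by
      intro g
      apply ψ.injective
      rw [ψ.apply_symm_apply, hp]
      group
    set d := p * (sigmaS p)⁻¹ with hd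
    have hall : ∀ X : SL2, Jsl⁻¹ * X * Jsl = d * X * d⁻¹ := by
      intro X
      have h1 := heq (sigmaS X)
      rw [sigmaC_eq, sigmaS_sigmaS, hsym, hp] at h1
      have h2 : sigmaS (p⁻¹ * sigmaS X * p)
          = (sigmaS p)⁻¹ * X * sigmaS p := by
        rw [sigmaS_mul, sigmaS_mul, sigmaS_inv, sigmaS_sigmaS]
      rw [h2] at h1
      rw [h1, hd]
      group
    set u := Jsl * d with hu
    have hcen : ∀ X : SL2, u * X = X * u := by
      intro X
      calc u * X = Jsl * (d * X * d⁻¹) * d := by rw [hu]; group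
        _ = Jsl * (Jsl⁻¹ * X * Jsl) * d := by rw [← hall]
        _ = X * u := by rw [hu]; group
    have hu1 := central_SL2 u hcen
    have hJp : u * sigmaS p = Jsl * p := by rw [hu, hd]; group
    have hJp' : (u : M2') * (p : M2').map (starRingEnd ℂ)
        = (Jsl : M2') * (p : M2') := by
      have := congrArg Subtype.val hJp
      rw [Matrix.SpecialLinearGroup.coe_mul, Matrix.SpecialLinearGroup.coe_mul, sigmaS_coe] at this
      exact this
    set pm := (p : M2') with hpm
    have hJre : (Jsl : M2').map (starRingEnd ℂ) = (Jsl : M2') := by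
      ext i j
      fin_cases i <;> fin_cases j <;> simp [Jsl, Matrix.map_apply]
    have hJJ : (Jsl : M2') * (Jsl : M2') = -1 := by
      have := congrArg Subtype.val J_sq
      rw [Matrix.SpecialLinearGroup.coe_mul] at this
      exact this
    have hpmneg : pm = -pm := by
      rcases hu1 with h | h
      · rw [h, one_mul] at hJp'
        -- pm.map conj = J * pm ; conjugate
        have h3 := congrArg (fun X => X.map (starRingEnd ℂ)) hJp'
        simp only [map_conj_conj', map_conj_mul', hJre] at h3
        calc pm = (Jsl : M2') * pm.map (starRingEnd ℂ) := h3
          _ = (Jsl : M2') * ((Jsl : M2') * pm) := by rw [hJp']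
          _ = -pm := by rw [← Matrix.mul_assoc, hJJ, neg_one_mul]
      · rw [h, neg_one_mul] at hJp'
        -- pm.map conj = -(J * pm)
        have h4 : pm.map (starRingEnd ℂ) = -((Jsl : M2') * pm) := by
          rw [← hJp', neg_neg]
        have h3 := congrArg (fun X => X.map (starRingEnd ℂ)) h4
        simp only [map_conj_conj', map_conj_neg', map_conj_mul', hJre] at h3
        calc pm = -((Jsl : M2') * pm.map (starRingEnd ℂ)) := h3
          _ = -((Jsl : M2') * -((Jsl : M2') * pm)) := by rw [h4]
          _ = -pm := by rw [Matrix.mul_neg, neg_neg, ← Matrix.mul_assoc, hJJ, neg_one_mul]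
    have hpm0 : pm = 0 := by
      have h2 : pm + pm = 0 := by
        nth_rewrite 1 [hpmneg]
        rw [neg_add_cancel]
      have h3 : (2:ℂ) • pm = 0 := by rw [two_smul]; exact h2
      rcases smul_eq_zero.mp h3 with h | h
      · norm_num at h
      · exact h
    have := p.2
    rw [← hpm, hpm0] at this
    rw [Matrix.det_zero] at this
    norm_num at this
  · -- classification
    rintro σ ⟨hm, hi, c, hc⟩
    -- the cocycle relation: w = c * σ_s(c) is central
    set w := c * sigmaS c with hw
    have hwc : ∀ g, w * g = g * w := by
      intro g
      have h1 := hi g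
      rw [hc, hc] at h1
      have h2 : sigmaS (c * sigmaS g * c⁻¹) = sigmaS c * g * (sigmaS c)⁻¹ := by
        rw [sigmaS_mul, sigmaS_mul, sigmaS_inv, sigmaS_sigmaS]
      rw [h2] at h1
      -- h1 : c * (sigmaS c * g * (sigmaS c)⁻¹) * c⁻¹ = g
      have h3 : w * g * w⁻¹ = g := by
        conv_rhs => rw [← h1]
        rw [hw]; group
      rw [mul_inv_eq_iff_eq_mul] at h3
      exact h3
    have hw1 := central_SL2 w hwc
    set cm := (c : M2') with hcm
    have hwcoe : (w : M2') = cm * cm.map (starRingEnd ℂ) := by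
      rw [hw, Matrix.SpecialLinearGroup.coe_mul, sigmaS_coe]
    have hJre : (Jsl : M2').map (starRingEnd ℂ) = (Jsl : M2') := by
      ext i j
      fin_cases i <;> fin_cases j <;> simp [Jsl, Matrix.map_apply]
    have hJJ : (Jsl : M2') * (Jsl : M2') = -1 := by
      have := congrArg Subtype.val J_sq
      rw [Matrix.SpecialLinearGroup.coe_mul] at this
      exact this
    rcases hw1 with h | h
    · -- split case : equivalent to σ_s
      left
      rw [hwcoe] at h
      have hcc : (1:M2') * 1 * (cm.map (starRingEnd ℂ)) * cm = 1 := by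
        rw [Matrix.one_mul, Matrix.one_mul]
        exact mul_eq_one_comm.mp h
      obtain ⟨a, ha1, ha2⟩ := exists_a 1 cm (by ext i j; simp [Matrix.map_apply, Matrix.one_apply, apply_ite]) (by simp) c.2 hcc
      set A : SL2 := ⟨a, ha1⟩ with hA
      have hA2 : sigmaS A = 1 * A * c ∨ sigmaS A = Nsl * (1 * A * c) := by
        rcases ha2 with h' | h'
        · left
          apply Subtype.ext
          rw [sigmaS_coe, Matrix.SpecialLinearGroup.coe_mul, Matrix.SpecialLinearGroup.coe_mul]
          simpa using h'
        · right
          apply Subtype.ext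
          rw [sigmaS_coe, Matrix.SpecialLinearGroup.coe_mul, Matrix.SpecialLinearGroup.coe_mul,
            Matrix.SpecialLinearGroup.coe_mul]
          show a.map (starRingEnd ℂ) = (-1 : M2') * ((1:M2') * a * cm)
          rw [neg_one_mul]
          simpa using h'
      obtain ⟨ψ, hψ, hgeq⟩ := equiv_of σ c 1 A hc hA2
      refine ⟨ψ, hψ, fun g => ?_⟩
      have := hgeq g
      rw [inv_one, one_mul, mul_one] at this
      exact this
    · -- compact case : equivalent to σ_c
      right
      rw [hwcoe] at h
      have hcc' : cm.map (starRingEnd ℂ) * cm = -1 := by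
        have h1 : cm * (-(cm.map (starRingEnd ℂ))) = 1 := by
          rw [Matrix.mul_neg, h, neg_neg]
        have h2 := mul_eq_one_comm.mp h1
        rw [Matrix.neg_mul] at h2
        linear_combination (norm := module) -h2
      have hcc : (Jsl : M2') * (Jsl : M2') * (cm.map (starRingEnd ℂ)) * cm = 1 := by
        rw [hJJ, Matrix.mul_assoc, hcc', neg_one_mul, neg_neg]
      obtain ⟨a, ha1, ha2⟩ := exists_a (Jsl : M2') cm hJre Jsl.2 c.2 hcc
      set A : SL2 := ⟨a, ha1⟩ with hA
      have hA2 : sigmaS A = Jsl * A * c ∨ sigmaS A = Nsl * (Jsl * A * c) := by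
        rcases ha2 with h' | h'
        · left
          apply Subtype.ext
          rw [sigmaS_coe, Matrix.SpecialLinearGroup.coe_mul, Matrix.SpecialLinearGroup.coe_mul]
          exact h'
        · right
          apply Subtype.ext
          rw [sigmaS_coe, Matrix.SpecialLinearGroup.coe_mul, Matrix.SpecialLinearGroup.coe_mul,
            Matrix.SpecialLinearGroup.coe_mul]
          show a.map (starRingEnd ℂ) = (-1 : M2') * ((Jsl : M2') * a * cm)
          rw [neg_one_mul]
          exact h'
      obtain ⟨ψ, hψ, hgeq⟩ := equiv_of σ c Jsl A hc hA2
      refine ⟨ψ, hψ, fun g => ?_⟩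
      rw [sigmaC_eq]
      exact hgeq g
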